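/- Exactness of the μ-mode integrator in three dimensions: for complex square matrices A₁ (n₁×n₁), A₂ (n₂×n₂), A₃ (n₃×n₃), M = A₃ ⊗ I₂ ⊗ I₁ + I₃ ⊗ A₂ ⊗ I₁ + I₃ ⊗ I₂ ⊗ A₁, any order-3 complex array U₀ indexed by (i₁,i₂,i₃) ∈ Fin n₁ × Fin n₂ × Fin n₃, and any t ∈ ℝ, the entry of exp(t·M)·vec U₀ at index (i₃,i₂,i₁) equals Σ_{j₁,j₂,j₃} exp(t·A₁)(i₁,j₁)·exp(t·A₂)(i₂,j₂)·exp(t·A₃)(i₃,j₃)·U₀(j₁,j₂,j₃), i.e., the result of the three successive μ-mode products of exp(t·A₁), exp(t·A₂), exp(t·A₃) with U₀. -/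

import Mathlib

open Matrix Kronecker

open NormedSpace in
noncomputable def kronRightAlgHom (m n : Type*) [Fintype m] [Fintype n]
    [DecidableEq m] [DecidableEq n] :
    Matrix m m ℂ →ₐ[ℂ] Matrix (m × n) (m × n) ℂ where
  toFun B := B ⊗ₖ (1 : Matrix n n ℂ)
  map_one' := Matrix.one_kronecker_one
  map_mul' A B := by rw [← Matrix.mul_kronecker_mul, Matrix.one_mul]
  map_zero' := Matrix.zero_kronecker _
  map_add' A B := Matrix.add_kronecker A B _
  commutes' c := by
    simp [Algebra.algebraMap_eq_smul_one, Matrix.smul_kronecker, Matrix.one_kronecker_one]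

open NormedSpace in
noncomputable def kronLeftAlgHom (m n : Type*) [Fintype m] [Fintype n]
    [DecidableEq m] [DecidableEq n] :
    Matrix n n ℂ →ₐ[ℂ] Matrix (m × n) (m × n) ℂ where
  toFun B := (1 : Matrix m m ℂ) ⊗ₖ B
  map_one' := Matrix.one_kronecker_one
  map_mul' A B := by rw [← Matrix.mul_kronecker_mul, Matrix.one_mul]
  map_zero' := Matrix.kronecker_zero _
  map_add' A B := Matrix.kronecker_add _ A B
  commutes' c := by
    simp [Algebra.algebraMap_eq_smul_one, Matrix.kronecker_smul, Matrix.one_kronecker_one]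

open NormedSpace in
lemma exp_kron_right (m n : Type*) [Fintype m] [Fintype n] [DecidableEq m] [DecidableEq n]
    (A : Matrix m m ℂ) :
    exp (A ⊗ₖ (1 : Matrix n n ℂ)) = (exp A) ⊗ₖ (1 : Matrix n n ℂ) := by
  letI : SeminormedRing (Matrix m m ℂ) := Matrix.linftyOpSemiNormedRing
  letI : NormedRing (Matrix m m ℂ) := Matrix.linftyOpNormedRing
  letI : NormedAlgebra ℂ (Matrix m m ℂ) := Matrix.linftyOpNormedAlgebra
  letI : NormedAlgebra ℚ (Matrix m m ℂ) := Matrix.linftyOpNormedAlgebra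
  letI : SeminormedRing (Matrix (m × n) (m × n) ℂ) := Matrix.linftyOpSemiNormedRing
  letI : NormedRing (Matrix (m × n) (m × n) ℂ) := Matrix.linftyOpNormedRing
  letI : NormedAlgebra ℂ (Matrix (m × n) (m × n) ℂ) := Matrix.linftyOpNormedAlgebra
  exact (map_exp (kronRightAlgHom m n)
    (LinearMap.continuous_of_finiteDimensional (kronRightAlgHom m n).toLinearMap) A).symm

open NormedSpace in
lemma exp_kron_left (m n : Type*) [Fintype m] [Fintype n] [DecidableEq m] [DecidableEq n]
    (B : Matrix n n ℂ) :
    exp ((1 : Matrix m m ℂ) ⊗ₖ B) = (1 : Matrix m m ℂ) ⊗ₖ (exp B) := by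
  letI : SeminormedRing (Matrix n n ℂ) := Matrix.linftyOpSemiNormedRing
  letI : NormedRing (Matrix n n ℂ) := Matrix.linftyOpNormedRing
  letI : NormedAlgebra ℂ (Matrix n n ℂ) := Matrix.linftyOpNormedAlgebra
  letI : NormedAlgebra ℚ (Matrix n n ℂ) := Matrix.linftyOpNormedAlgebra
  letI : SeminormedRing (Matrix (m × n) (m × n) ℂ) := Matrix.linftyOpSemiNormedRing
  letI : NormedRing (Matrix (m × n) (m × n) ℂ) := Matrix.linftyOpNormedRing
  letI : NormedAlgebra ℂ (Matrix (m × n) (m × n) ℂ) := Matrix.linftyOpNormedAlgebra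
  exact (map_exp (kronLeftAlgHom m n)
    (LinearMap.continuous_of_finiteDimensional (kronLeftAlgHom m n).toLinearMap) B).symm

lemma sum_comm3 {α β γ M : Type*} [Fintype α] [Fintype β] [Fintype γ] [AddCommMonoid M]
    (f : α → β → γ → M) :
    ∑ a, ∑ b, ∑ c, f a b c = ∑ c, ∑ b, ∑ a, f a b c := by
  calc ∑ a, ∑ b, ∑ c, f a b c
      = ∑ b, ∑ a, ∑ c, f a b c := Finset.sum_comm
    _ = ∑ b, ∑ c, ∑ a, f a b c := Finset.sum_congr rfl fun b _ => Finset.sum_comm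
    _ = ∑ c, ∑ b, ∑ a, f a b c := Finset.sum_comm

theorem mu_mode_exact_3d (n₁ n₂ n₃ : ℕ)
    (A₁ : Matrix (Fin n₁) (Fin n₁) ℂ) (A₂ : Matrix (Fin n₂) (Fin n₂) ℂ)
    (A₃ : Matrix (Fin n₃) (Fin n₃) ℂ)
    (U₀ : Fin n₁ → Fin n₂ → Fin n₃ → ℂ) (t : ℝ)
    (i₁ : Fin n₁) (i₂ : Fin n₂) (i₃ : Fin n₃) :
    (NormedSpace.exp ((t : ℂ) •
        ((A₃ ⊗ₖ (1 : Matrix (Fin n₂) (Fin n₂) ℂ)) ⊗ₖ (1 : Matrix (Fin n₁) (Fin n₁) ℂ) +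
          ((1 : Matrix (Fin n₃) (Fin n₃) ℂ) ⊗ₖ A₂) ⊗ₖ (1 : Matrix (Fin n₁) (Fin n₁) ℂ) +
          ((1 : Matrix (Fin n₃) (Fin n₃) ℂ) ⊗ₖ (1 : Matrix (Fin n₂) (Fin n₂) ℂ)) ⊗ₖ A₁))).mulVec
        (fun q : (Fin n₃ × Fin n₂) × Fin n₁ => U₀ q.2 q.1.2 q.1.1) ((i₃, i₂), i₁) =
      ∑ j₁ : Fin n₁, ∑ j₂ : Fin n₂, ∑ j₃ : Fin n₃,
        NormedSpace.exp ((t : ℂ) • A₁) i₁ j₁ *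
          NormedSpace.exp ((t : ℂ) • A₂) i₂ j₂ *
          NormedSpace.exp ((t : ℂ) • A₃) i₃ j₃ * U₀ j₁ j₂ j₃ := by
  set X : Matrix ((Fin n₃ × Fin n₂) × Fin n₁) ((Fin n₃ × Fin n₂) × Fin n₁) ℂ :=
    (A₃ ⊗ₖ (1 : Matrix (Fin n₂) (Fin n₂) ℂ)) ⊗ₖ (1 : Matrix (Fin n₁) (Fin n₁) ℂ) with hX
  set Y : Matrix ((Fin n₃ × Fin n₂) × Fin n₁) ((Fin n₃ × Fin n₂) × Fin n₁) ℂ :=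
    ((1 : Matrix (Fin n₃) (Fin n₃) ℂ) ⊗ₖ A₂) ⊗ₖ (1 : Matrix (Fin n₁) (Fin n₁) ℂ) with hY
  set Z : Matrix ((Fin n₃ × Fin n₂) × Fin n₁) ((Fin n₃ × Fin n₂) × Fin n₁) ℂ :=
    ((1 : Matrix (Fin n₃) (Fin n₃) ℂ) ⊗ₖ (1 : Matrix (Fin n₂) (Fin n₂) ℂ)) ⊗ₖ A₁ with hZ
  have hXY : Commute X Y := by
    simp only [Commute, SemiconjBy, hX, hY, ← Matrix.mul_kronecker_mul, Matrix.one_mul,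
      Matrix.mul_one]
  have hXZ : Commute X Z := by
    simp only [Commute, SemiconjBy, hX, hZ, ← Matrix.mul_kronecker_mul, Matrix.one_mul,
      Matrix.mul_one]
  have hYZ : Commute Y Z := by
    simp only [Commute, SemiconjBy, hY, hZ, ← Matrix.mul_kronecker_mul, Matrix.one_mul,
      Matrix.mul_one]
  have hexpX : NormedSpace.exp ((t : ℂ) • X) =
      (NormedSpace.exp ((t : ℂ) • A₃) ⊗ₖ (1 : Matrix (Fin n₂) (Fin n₂) ℂ)) ⊗ₖ
        (1 : Matrix (Fin n₁) (Fin n₁) ℂ) := by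
    rw [hX, ← Matrix.smul_kronecker, ← Matrix.smul_kronecker, exp_kron_right, exp_kron_right]
  have hexpY : NormedSpace.exp ((t : ℂ) • Y) =
      ((1 : Matrix (Fin n₃) (Fin n₃) ℂ) ⊗ₖ NormedSpace.exp ((t : ℂ) • A₂)) ⊗ₖ
        (1 : Matrix (Fin n₁) (Fin n₁) ℂ) := by
    rw [hY, ← Matrix.smul_kronecker, ← Matrix.kronecker_smul, exp_kron_right, exp_kron_left]
  have hexpZ : NormedSpace.exp ((t : ℂ) • Z) =
      ((1 : Matrix (Fin n₃) (Fin n₃) ℂ) ⊗ₖ (1 : Matrix (Fin n₂) (Fin n₂) ℂ)) ⊗ₖ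
        NormedSpace.exp ((t : ℂ) • A₁) := by
    rw [hZ, ← Matrix.kronecker_smul, Matrix.one_kronecker_one, exp_kron_left,
      ← Matrix.one_kronecker_one]
  have key : NormedSpace.exp ((t : ℂ) • (X + Y + Z)) =
      (NormedSpace.exp ((t : ℂ) • A₃) ⊗ₖ NormedSpace.exp ((t : ℂ) • A₂)) ⊗ₖ
        NormedSpace.exp ((t : ℂ) • A₁) := by
    rw [smul_add, smul_add, Matrix.exp_add_of_commute _ _
        (((hXZ.smul_left _).smul_right _).add_left ((hYZ.smul_left _).smul_right _)),
      Matrix.exp_add_of_commute _ _ ((hXY.smul_left _).smul_right _),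
      hexpX, hexpY, hexpZ]
    simp only [← Matrix.mul_kronecker_mul, Matrix.one_mul, Matrix.mul_one]
  rw [key]
  simp only [Matrix.mulVec, dotProduct, Fintype.sum_prod_type, kroneckerMap_apply]
  rw [sum_comm3]
  refine Finset.sum_congr rfl fun j₁ _ => Finset.sum_congr rfl fun j₂ _ =>
    Finset.sum_congr rfl fun j₃ _ => ?_
  ring
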